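/- Let 0 ≤ k < n and let ν be a (not necessarily strict) partition which, as a straight shape, is balanced with height and width both equal to k. Set λ := δ_n + ν + (n−1−k)^n. Then the distributive lattice [∅, λ]_shift = J(P_λ^shift) is tCDE, i.e. E(μ; ddeg) = n/2 for every toggle-symmetric distribution μ on J(P_λ^shift); in particular its edge density E(uni; ddeg) equals n/2. -/

import Mathlib

open scoped Classical

noncomputable section

namespace CDEPaper

/-- The down-degree of `p`: the number of elements that `p` covers, as a real number. -/
def ddeg {α : Type*} [PartialOrder α] (p : α) : ℝ :=
  (Nat.card {q : α // q ⋖ p} : ℝ)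

/-- The expectation of the statistic `f` with respect to the weights `μ`. -/
def expect {α : Type*} (μ : α → ℝ) (f : α → ℝ) : ℝ :=
  ∑ᶠ p, μ p * f p

/-- The uniform distribution on a finite type. -/
def uni (α : Type*) : α → ℝ :=
  fun _ => (Nat.card α : ℝ)⁻¹

/-- `μ` is a probability distribution. -/
def IsProbDist {α : Type*} (μ : α → ℝ) : Prop :=
  (∀ x, 0 ≤ μ x) ∧ (∑ᶠ x, μ x) = 1

/-- The `k`-chain distribution: each `p` gets probability proportional to the number of
`k`-chains (strictly increasing sequences `c₀ < c₁ < ⋯ < c_k`) passing through `p`. -/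
def chainDist (α : Type*) [PartialOrder α] (k : ℕ) : α → ℝ := fun p =>
  (Nat.card {c : Fin (k + 1) → α // StrictMono c ∧ ∃ i, c i = p} : ℝ) /
    (((k : ℝ) + 1) * (Nat.card {c : Fin (k + 1) → α // StrictMono c} : ℝ))

/-- The `m`-multichain distribution: each `p` gets probability proportional to the number of
`m`-multichains (weakly increasing sequences) passing through `p`. -/
def mchainDist (α : Type*) [PartialOrder α] (m : ℕ) : α → ℝ := fun p =>
  (Nat.card {c : Fin (m + 1) → α // Monotone c ∧ ∃ i, c i = p} : ℝ) /
    (Nat.card {cq : (Fin (m + 1) → α) × α // Monotone cq.1 ∧ ∃ i, cq.1 i = cq.2} : ℝ)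

/-- The modified `m`-multichain distribution: each `p` gets probability proportional to the
number of pairs `(c, i)` where `c` is an `m`-multichain and `c i = p`. -/
def mhatDist (α : Type*) [PartialOrder α] (m : ℕ) : α → ℝ := fun p =>
  (Nat.card {ci : (Fin (m + 1) → α) × Fin (m + 1) // Monotone ci.1 ∧ ci.1 ci.2 = p} : ℝ) /
    (((m : ℝ) + 1) * (Nat.card {c : Fin (m + 1) → α // Monotone c} : ℝ))

/-- The maximal chain distribution: each `p` gets probability proportional to the number of
maximal chains passing through `p`. -/
def maxchainDist (α : Type*) [PartialOrder α] : α → ℝ := fun p =>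
  (Nat.card {C : Set α // IsMaxChain (· ≤ ·) C ∧ p ∈ C} : ℝ) /
    (Nat.card {Cq : Set α × α // IsMaxChain (· ≤ ·) Cq.1 ∧ Cq.2 ∈ Cq.1} : ℝ)

/-- A poset has coincidental down-degree expectations (CDE). -/
def IsCDE (α : Type*) [PartialOrder α] : Prop :=
  expect (maxchainDist α) ddeg = expect (uni α) ddeg

/-- A poset is mCDE: the expected down-degree with respect to the `k`-chain distribution agrees
with the uniform expected down-degree for every `k = 0, 1, …, r` (i.e. every `k` for which a
`k`-chain exists). -/
def IsMCDE (α : Type*) [PartialOrder α] : Prop :=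
  ∀ k : ℕ, (∃ c : Fin (k + 1) → α, StrictMono c) →
    expect (chainDist α k) ddeg = expect (uni α) ddeg

/-- The distributive lattice `J(P)` of order ideals (lower sets) of a poset, ordered by
inclusion. -/
abbrev OIdeal (α : Type*) [PartialOrder α] : Type _ := {I : Set α // IsLowerSet I}

/-- The indicator statistic that `p` can be toggled into the order ideal `I`. -/
def Tplus {α : Type*} [PartialOrder α] (p : α) (I : OIdeal α) : ℝ :=
  if p ∉ I.1 ∧ IsLowerSet (I.1 ∪ {p}) then 1 else 0

/-- The indicator statistic that `p` can be toggled out of the order ideal `I`. -/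
def Tminus {α : Type*} [PartialOrder α] (p : α) (I : OIdeal α) : ℝ :=
  if p ∈ I.1 ∧ IsLowerSet (I.1 \ {p}) then 1 else 0

/-- A distribution on `J(P)` is toggle-symmetric if for every `p` the probability that `p` can
be toggled in equals the probability that `p` can be toggled out. -/
def ToggleSymmetric {α : Type*} [PartialOrder α] (μ : OIdeal α → ℝ) : Prop :=
  ∀ p : α, expect μ (Tplus p) = expect μ (Tminus p)

/-- `J(P)` is toggle-CDE (tCDE): every toggle-symmetric probability distribution has the same
expected down-degree as the uniform distribution. -/
def IsTCDE (α : Type*) [PartialOrder α] : Prop :=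
  ∀ μ : OIdeal α → ℝ, IsProbDist μ → ToggleSymmetric μ →
    expect μ ddeg = expect (uni (OIdeal α)) ddeg

end CDEPaper
namespace CDEPaper

/-! ### Skew shapes and shifted shapes -/

/-- The boxes of the skew shape `λ/ν` of height `a`, in matrix coordinates with 1-based rows
and columns: row `i` (for `1 ≤ i ≤ a`) consists of the boxes `[i,j]` with `ν i < j ≤ λ i`.
The poset structure is the one induced from the componentwise (product) order on `ℕ × ℕ`. -/
def skewCells (a : ℕ) (lam nu : ℕ → ℕ) : Set (ℕ × ℕ) :=
  {b | 1 ≤ b.1 ∧ b.1 ≤ a ∧ nu b.1 < b.2 ∧ b.2 ≤ lam b.1}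

/-- The boxes of the shifted Young diagram of a strict partition `λ` of length `l`:
the boxes `[i,j]` with `1 ≤ i ≤ l` and `i ≤ j ≤ λ i + i - 1`.  The poset structure is the one
induced from the componentwise (product) order on `ℕ × ℕ`. -/
def shiftCells (l : ℕ) (lam : ℕ → ℕ) : Set (ℕ × ℕ) :=
  {b | 1 ≤ b.1 ∧ b.1 ≤ l ∧ b.1 ≤ b.2 ∧ b.2 < lam b.1 + b.1}

/-- The shifted rook statistic `R^shift_{ij}` on order ideals of (the poset of) `S`. -/
def Rshift (S : Set (ℕ × ℕ)) (i j : ℕ) (I : OIdeal ↥S) : ℝ :=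
  (∑ᶠ (q : ↥S), if (q : ℕ × ℕ).1 ≤ i ∧ (q : ℕ × ℕ).2 ≤ j then Tplus q I else 0)
    + (∑ᶠ (q : ↥S), if i ≤ (q : ℕ × ℕ).1 ∧ j ≤ (q : ℕ × ℕ).2 then Tminus q I else 0)
    - (∑ᶠ (q : ↥S),
        if (q : ℕ × ℕ).1 < i ∧ (q : ℕ × ℕ).2 < j ∧ (q : ℕ × ℕ).1 < (q : ℕ × ℕ).2 then
          Tminus q I else 0)
    - (∑ᶠ (q : ↥S),
        if i < (q : ℕ × ℕ).1 ∧ j < (q : ℕ × ℕ).2 ∧ (q : ℕ × ℕ).1 < (q : ℕ × ℕ).2 then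
          Tplus q I else 0)

/-- The shifted diagram of `λ` (of length `l`) has an outward corner indexed by `i'`
(a north step followed by an east step on the southeast border, occurring at the lattice point
`(i', λ (i'+1) + i')`) if and only if `1 ≤ i' < l` and `λ i' ≥ λ (i'+1) + 2`. -/
def IsCorner (l : ℕ) (lam : ℕ → ℕ) (i' : ℕ) : Prop :=
  1 ≤ i' ∧ i' + 1 ≤ l ∧ lam (i' + 1) + 2 ≤ lam i'

/-- An order ideal `I ∈ J(P_λ^shift)` contains the outward corner indexed by `i'`
(i.e. the lattice path of `I` contains both steps of the corner):  equivalently, `I` contains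
both the last box `[i'+1, λ(i'+1)+i']` of row `i'+1` and the box `[i', λ(i'+1)+i'+1]`. -/
def ContainsCorner (l : ℕ) (lam : ℕ → ℕ) (I : OIdeal ↥(shiftCells l lam)) (i' : ℕ) : Prop :=
  (∃ q : ↥(shiftCells l lam), (q : ℕ × ℕ) = (i' + 1, lam (i' + 1) + i') ∧ q ∈ I.1) ∧
  (∃ q : ↥(shiftCells l lam), (q : ℕ × ℕ) = (i', lam (i' + 1) + i' + 1) ∧ q ∈ I.1)

/-- A (not necessarily strict) partition `ν` (with parts `ν 1 ≥ ν 2 ≥ ⋯`) which, viewed as a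
straight shape, is balanced with height and width both equal to `k`:  it has exactly `k`
nonzero parts, its first part is `k`, and every outward corner of its boundary path (which
occurs at the point `(i, ν (i+1))` whenever `ν i > ν (i+1)`) lies on the anti-diagonal
`i + j = k` of the `k × k` square. -/
def BalancedSquare (k : ℕ) (nu : ℕ → ℕ) : Prop :=
  (∀ i, 1 ≤ i → nu (i + 1) ≤ nu i) ∧
  (∀ i, 1 ≤ i → i ≤ k → 1 ≤ nu i) ∧
  (∀ i, k < i → nu i = 0) ∧
  nu 1 = k ∧
  (∀ i, 1 ≤ i → i + 1 ≤ k → nu (i + 1) < nu i → i + nu (i + 1) = k)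

/-- The poset `P_{a,1,1,d}`: a bottom chain `w₁ < ⋯ < w_a`, two incomparable elements `x, y`
covering `w_a`, and a top chain `z₁ < ⋯ < z_d` with `z₁` covering both `x` and `y`.
It is realized inside `ℕ × ℕ` (with the componentwise order) as
`w_i = (i,i)`, `x = (a+1, a)`, `y = (a, a+1)`, `z_j = (a+j, a+j)`. -/
def Pa11d (a d : ℕ) : Set (ℕ × ℕ) :=
  {p | (1 ≤ p.1 ∧ p.1 ≤ a ∧ p.2 = p.1) ∨ p = (a + 1, a) ∨ p = (a, a + 1) ∨
    (∃ j, 1 ≤ j ∧ j ≤ d ∧ p = (a + j, a + j))}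

/-! ### Shifted set-valued tableaux

Letters of the primed alphabet `1 < 1' < 2 < 2' < ⋯` are encoded as natural numbers:
the letter `m : ℕ` has value `m / 2 + 1` and is primed iff `m` is odd
(so `0 ↦ 1, 1 ↦ 1', 2 ↦ 2, 3 ↦ 2', …`); the order on letters is the usual order on `ℕ`. -/

/-- The value of a letter. -/
def letterVal (m : ℕ) : ℕ := m / 2 + 1

/-- `T` is a shifted set-valued tableau of shape given by the box set `S`:  each box gets a
finite nonempty set of letters, all entries of a box weakly precede all entries of any strictly
larger box, each unprimed letter appears at most once in each column, and each primed letter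
appears at most once in each row. -/
def IsSSVT (S : Set (ℕ × ℕ)) (T : ↥S → Finset ℕ) : Prop :=
  (∀ u, (T u).Nonempty) ∧
  (∀ u v : ↥S, u < v → ∀ x ∈ T u, ∀ y ∈ T v, x ≤ y) ∧
  (∀ u v : ↥S, u ≠ v → (u : ℕ × ℕ).2 = (v : ℕ × ℕ).2 →
    ∀ m : ℕ, m % 2 = 0 → ¬(m ∈ T u ∧ m ∈ T v)) ∧
  (∀ u v : ↥S, u ≠ v → (u : ℕ × ℕ).1 = (v : ℕ × ℕ).1 →
    ∀ m : ℕ, m % 2 = 1 → ¬(m ∈ T u ∧ m ∈ T v))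

/-- `T` is standard: distinct entry occurrences have distinct values, and the values used are
exactly `1, 2, …, N` where `N` is the total number of entries. -/
def IsStandardT (S : Set (ℕ × ℕ)) (T : ↥S → Finset ℕ) : Prop :=
  (∀ u v : ↥S, ∀ x ∈ T u, ∀ y ∈ T v, letterVal x = letterVal y → u = v ∧ x = y) ∧
  (∀ m : ℕ, 1 ≤ m → m ≤ ∑ᶠ (u : ↥S), (T u).card → ∃ u : ↥S, ∃ x ∈ T u, letterVal x = m)

/-- `T` is barely set-valued: exactly one box has two entries; all other boxes have one. -/
def IsBarelySetValued (S : Set (ℕ × ℕ)) (T : ↥S → Finset ℕ) : Prop :=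
  ∃ u₀ : ↥S, (T u₀).card = 2 ∧ ∀ u : ↥S, u ≠ u₀ → (T u).card = 1

/-- `T` is unprimed: no primed letters appear. -/
def IsUnprimed (S : Set (ℕ × ℕ)) (T : ↥S → Finset ℕ) : Prop :=
  ∀ u : ↥S, ∀ x ∈ T u, x % 2 = 0

/-- `g^λ`: the number of unprimed standard shifted tableaux of shape `λ`. -/
def gShift (l : ℕ) (lam : ℕ → ℕ) : ℕ :=
  Nat.card {T : ↥(shiftCells l lam) → Finset ℕ //
    IsSSVT (shiftCells l lam) T ∧ IsStandardT (shiftCells l lam) T ∧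
    (∀ u, (T u).card = 1) ∧ IsUnprimed (shiftCells l lam) T}

/-- The number of standard shifted barely set-valued tableaux of shape `λ`. -/
def numBarelySVT (l : ℕ) (lam : ℕ → ℕ) : ℕ :=
  Nat.card {T : ↥(shiftCells l lam) → Finset ℕ //
    IsSSVT (shiftCells l lam) T ∧ IsStandardT (shiftCells l lam) T ∧
    IsBarelySetValued (shiftCells l lam) T}

/-! ### Toggles, rowmotion, orbits -/

/-- The toggle `τ_p` on order ideals. -/
def toggle {α : Type*} [PartialOrder α] (p : α) (I : OIdeal α) : OIdeal α :=
  if h : p ∉ I.1 ∧ IsLowerSet (I.1 ∪ {p}) then ⟨I.1 ∪ {p}, h.2⟩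
  else if h' : p ∈ I.1 ∧ IsLowerSet (I.1 \ {p}) then ⟨I.1 \ {p}, h'.2⟩
  else I

/-- The composition of the toggles along a list, applied head first. -/
def applyToggles {α : Type*} [PartialOrder α] (L : List α) (I : OIdeal α) : OIdeal α :=
  L.foldl (fun J p => toggle p J) I

/-- The forward orbit of `x` under `Φ` (for invertible `Φ` on a finite set, the orbit). -/
def orbit {β : Type*} (Φ : β → β) (x : β) : Set β := {y | ∃ n : ℕ, Φ^[n] x = y}

/-- The probability distribution that is uniform on the orbit of `x` under `Φ` and zero
outside of it. -/
def orbitDist {β : Type*} (Φ : β → β) (x : β) : β → ℝ := fun y =>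
  if y ∈ orbit Φ x then (Nat.card ↥(orbit Φ x) : ℝ)⁻¹ else 0

/-- Rowmotion on order ideals: `I ↦ {x : x ≤ y for some minimal element y of P \ I}`. -/
def rowmotion {α : Type*} [PartialOrder α] (I : OIdeal α) : OIdeal α :=
  ⟨{x | ∃ y, (y ∉ I.1 ∧ ∀ z, z ∉ I.1 → z ≤ y → z = y) ∧ x ≤ y}, by
    intro a b hba ha
    obtain ⟨y, hy, hay⟩ := ha
    exact ⟨y, hy, le_trans hba hay⟩⟩

/-- The antichain cardinality statistic `I ↦ #max(I)`. -/
def antichainCard {α : Type*} [PartialOrder α] (I : OIdeal α) : ℝ :=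
  (Nat.card {p : α // p ∈ I.1 ∧ ∀ q, q ∈ I.1 → p ≤ q → p = q} : ℝ)

end CDEPaper

namespace CDEPaper

/-! ### development -/

/-- Abstract properties of the shapes `δ_n + ν + (n-1-k)^n`. -/
structure Shape (n : ℕ) (lam : ℕ → ℕ) : Prop where
  hn : 1 ≤ n
  pos : ∀ i, 1 ≤ i → i ≤ n → 1 ≤ lam i
  strict : ∀ i, 1 ≤ i → i + 1 ≤ n → lam (i + 1) + 1 ≤ lam i
  first : lam 1 + 1 = 2 * n
  corner : ∀ i, 1 ≤ i → i + 1 ≤ n → lam (i + 1) + 2 ≤ lam i → lam (i + 1) + 2 * i + 1 = 2 * n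

lemma shape_of_balanced {n k : ℕ} {nu lam : ℕ → ℕ} (hkn : k < n)
    (hbal : BalancedSquare k nu)
    (hlam : ∀ i, 1 ≤ i → i ≤ n → lam i = (n + 1 - i) + nu i + (n - 1 - k)) :
    Shape n lam := by
  obtain ⟨hmono, hpos, hzero, hfirst, hcorner⟩ := hbal
  constructor
  · omega
  · intro i h1 h2
    have := hlam i h1 h2
    omega
  · intro i h1 h2
    have e1 := hlam i h1 (by omega)
    have e2 := hlam (i + 1) (by omega) h2
    have := hmono i h1
    omega
  · have := hlam 1 le_rfl (by omega)
    omega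
  · intro i h1 h2 hgap
    have e1 := hlam i h1 (by omega)
    have e2 := hlam (i + 1) (by omega) h2
    have hnu : nu (i + 1) < nu i := by omega
    rcases le_or_gt (i + 1) k with hik | hik
    · have := hcorner i h1 hik hnu
      omega
    · rcases le_or_gt i k with hik2 | hik2
      · -- i = k
        have hz : nu (i + 1) = 0 := hzero (i + 1) (by omega)
        have : i = k := by omega
        subst this
        omega
      · -- i > k : contradiction
        have hz1 : nu i = 0 := hzero i hik2
        have hz2 : nu (i + 1) = 0 := hzero (i + 1) (by omega)
        omega

section ShapeLemmas

variable {n : ℕ} {lam : ℕ → ℕ}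

lemma mem_shiftCells {x : ℕ × ℕ} :
    x ∈ shiftCells n lam ↔ 1 ≤ x.1 ∧ x.1 ≤ n ∧ x.1 ≤ x.2 ∧ x.2 < lam x.1 + x.1 :=
  Iff.rfl

lemma Shape.end_mono (sh : Shape n lam) {a b : ℕ} (ha : 1 ≤ a) (hab : a ≤ b) (hb : b ≤ n) :
    lam b + b ≤ lam a + a := by
  induction b, hab using Nat.le_induction with
  | base => omega
  | succ m hm ih =>
    have h1 : 1 ≤ m := by omega
    have := sh.strict m h1 hb
    have := ih (by omega)
    omega

lemma Shape.cell_up (sh : Shape n lam) {a b a' : ℕ} (h : (a, b) ∈ shiftCells n lam)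
    (h1 : 1 ≤ a') (h2 : a' ≤ a) : (a', b) ∈ shiftCells n lam := by
  rw [mem_shiftCells] at h ⊢
  simp only at h ⊢
  have := sh.end_mono h1 h2 h.2.1
  omega

lemma cell_left {a b b' : ℕ} (h : (a, b) ∈ shiftCells n lam)
    (h1 : a ≤ b') (h2 : b' ≤ b) : (a, b') ∈ shiftCells n lam := by
  rw [mem_shiftCells] at h ⊢
  simp only at h ⊢
  omega

lemma shiftCells_finite (n : ℕ) (lam : ℕ → ℕ) : (shiftCells n lam).Finite := by
  classical
  set B := (Finset.range (n + 1)).sup (fun i => lam i + i) with hB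
  apply Set.Finite.subset ((Set.finite_Icc 1 n).prod (Set.finite_Icc 1 B))
  rintro ⟨a, b⟩ h
  rw [mem_shiftCells] at h
  simp only at h
  constructor
  · exact ⟨h.1, h.2.1⟩
  · refine ⟨by omega, ?_⟩
    have : lam a + a ≤ B := by
      apply Finset.le_sup (f := fun i => lam i + i)
      simp only [Finset.mem_range]
      omega
    simp only
    omega

end ShapeLemmas

abbrev PP (n : ℕ) (lam : ℕ → ℕ) : Type := ↥(shiftCells n lam)

section OrderLemmas

variable {n : ℕ} {lam : ℕ → ℕ}

lemma sub_le_iff {q r : PP n lam} :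
    q ≤ r ↔ (q : ℕ × ℕ).1 ≤ (r : ℕ × ℕ).1 ∧ (q : ℕ × ℕ).2 ≤ (r : ℕ × ℕ).2 := by
  rw [← Subtype.coe_le_coe, Prod.le_def]

lemma sub_lt_iff {q r : PP n lam} :
    q < r ↔ (q : ℕ × ℕ).1 ≤ (r : ℕ × ℕ).1 ∧ (q : ℕ × ℕ).2 ≤ (r : ℕ × ℕ).2 ∧
      ((q : ℕ × ℕ).1 ≠ (r : ℕ × ℕ).1 ∨ (q : ℕ × ℕ).2 ≠ (r : ℕ × ℕ).2) := by
  rw [lt_iff_le_and_ne, sub_le_iff]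
  constructor
  · rintro ⟨⟨h1, h2⟩, hne⟩
    refine ⟨h1, h2, ?_⟩
    by_contra hc
    push_neg at hc
    exact hne (Subtype.ext (Prod.ext hc.1 hc.2))
  · rintro ⟨h1, h2, hne⟩
    refine ⟨⟨h1, h2⟩, fun hc => ?_⟩
    have := congrArg Subtype.val hc
    rcases hne with h | h
    · exact h (congrArg Prod.fst this)
    · exact h (congrArg Prod.snd this)

lemma prod_lt_iff {x y : ℕ × ℕ} :
    x < y ↔ x.1 ≤ y.1 ∧ x.2 ≤ y.2 ∧ (x.1 ≠ y.1 ∨ x.2 ≠ y.2) := by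
  rw [lt_iff_le_and_ne, Prod.le_def]
  constructor
  · rintro ⟨⟨h1, h2⟩, hne⟩
    refine ⟨h1, h2, ?_⟩
    by_contra hc
    push_neg at hc
    exact hne (Prod.ext hc.1 hc.2)
  · rintro ⟨h1, h2, hne⟩
    refine ⟨⟨h1, h2⟩, fun hc => ?_⟩
    rcases hne with h | h
    · exact h (congrArg Prod.fst hc)
    · exact h (congrArg Prod.snd hc)

lemma sub_lt_coe {q r : PP n lam} : q < r ↔ (q : ℕ × ℕ) < (r : ℕ × ℕ) := by
  rw [sub_lt_iff, prod_lt_iff]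

/-- Membership of a coordinate pair in an order ideal. -/
def memO (K : OIdeal (PP n lam)) (x : ℕ × ℕ) : Prop :=
  ∃ h : x ∈ shiftCells n lam, (⟨x, h⟩ : PP n lam) ∈ K.1

lemma memO_coe {K : OIdeal (PP n lam)} {q : PP n lam} : memO K (q : ℕ × ℕ) ↔ q ∈ K.1 := by
  constructor
  · rintro ⟨h, hm⟩
    rwa [show (⟨(q : ℕ × ℕ), h⟩ : PP n lam) = q from Subtype.ext rfl] at hm
  · intro h
    exact ⟨q.2, by rwa [show (⟨(q : ℕ × ℕ), q.2⟩ : PP n lam) = q from Subtype.ext rfl]⟩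

lemma memO_mono {K : OIdeal (PP n lam)} {x y : ℕ × ℕ} (hy : y ∈ shiftCells n lam)
    (hyx : y ≤ x) (hx : memO K x) : memO K y := by
  obtain ⟨hxS, hxm⟩ := hx
  exact ⟨hy, K.2 (by rw [← Subtype.coe_le_coe]; exact hyx) hxm⟩

lemma tplus_eq (K : OIdeal (PP n lam)) (q : PP n lam) :
    Tplus q K = if (¬ memO K (q : ℕ × ℕ) ∧
      ∀ y, y ∈ shiftCells n lam → y < (q : ℕ × ℕ) → memO K y) then 1 else 0 := by
  unfold Tplus
  apply if_congr _ rfl rfl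
  constructor
  · rintro ⟨hq, hlow⟩
    refine ⟨fun h => hq (memO_coe.1 h), fun y hy hlt => ?_⟩
    have hle : (⟨y, hy⟩ : PP n lam) ≤ q := by
      rw [← Subtype.coe_le_coe]; exact le_of_lt hlt
    have : (⟨y, hy⟩ : PP n lam) ∈ K.1 ∪ {q} := hlow hle (by right; rfl)
    rcases this with h | h
    · exact ⟨hy, h⟩
    · exfalso
      have : y = (q : ℕ × ℕ) := congrArg Subtype.val h
      exact absurd this (ne_of_lt hlt)
  · rintro ⟨hq, hall⟩
    refine ⟨fun h => hq (memO_coe.2 h), fun a b hba ha => ?_⟩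
    rcases ha with ha | ha
    · left; exact K.2 hba ha
    · rcases eq_or_lt_of_le hba with h | h
      · right; rw [h]; exact ha
      · left
        rw [Set.mem_singleton_iff] at ha
        subst ha
        have := hall (b : ℕ × ℕ) b.2 (sub_lt_coe.1 h)
        exact memO_coe.1 this

lemma tminus_eq (K : OIdeal (PP n lam)) (q : PP n lam) :
    Tminus q K = if (memO K (q : ℕ × ℕ) ∧
      ∀ y, y ∈ shiftCells n lam → (q : ℕ × ℕ) < y → ¬ memO K y) then 1 else 0 := by
  unfold Tminus
  apply if_congr _ rfl rfl
  constructor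
  · rintro ⟨hq, hlow⟩
    refine ⟨memO_coe.2 hq, fun y hy hlt hmem => ?_⟩
    obtain ⟨hyS, hym⟩ := hmem
    have hle : q ≤ (⟨y, hy⟩ : PP n lam) := by
      rw [← Subtype.coe_le_coe]; exact le_of_lt hlt
    have : q ∈ K.1 \ {q} := hlow hle ⟨hym, by
      intro hc
      have : y = (q : ℕ × ℕ) := congrArg Subtype.val hc
      exact absurd this.symm (ne_of_lt hlt)⟩
    exact this.2 rfl
  · rintro ⟨hq, hall⟩
    refine ⟨memO_coe.1 hq, fun a b hba ha => ?_⟩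
    refine ⟨K.2 hba ha.1, fun hc => ?_⟩
    rw [Set.mem_singleton_iff] at hc
    subst hc
    rcases eq_or_lt_of_le hba with h | h
    · exact ha.2 (by rw [← h]; rfl)
    · exact hall (a : ℕ × ℕ) a.2 (sub_lt_coe.1 h) (memO_coe.2 ha.1)

end OrderLemmas


section ChunkTwo

lemma mem_shiftCells' {n : ℕ} {lam : ℕ → ℕ} {a b : ℕ} :
    (a, b) ∈ shiftCells n lam ↔ 1 ≤ a ∧ a ≤ n ∧ a ≤ b ∧ b < lam a + a :=
  Iff.rfl

lemma prod_lt_mk {a b c d : ℕ} :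
    (a, b) < (c, d) ↔ a ≤ c ∧ b ≤ d ∧ (a ≠ c ∨ b ≠ d) :=
  prod_lt_iff

lemma prod_le_mk {a b c d : ℕ} : (a, b) ≤ (c, d) ↔ a ≤ c ∧ b ≤ d :=
  Prod.mk_le_mk

/-- The weight function: `2n - i - j` off the diagonal, `n - i` on it. -/
def cw (n : ℕ) (x : ℕ × ℕ) : ℝ :=
  if x.1 = x.2 then (n : ℝ) - x.1 else 2 * (n : ℝ) - x.1 - x.2

/-- The weighted toggle statistic. -/
def FF (n : ℕ) (lam : ℕ → ℕ) (I : OIdeal (PP n lam)) : ℝ :=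
  ∑ᶠ q : PP n lam,
    ((1 + cw n (q : ℕ × ℕ)) * Tplus q I + (1 - cw n (q : ℕ × ℕ)) * Tminus q I)

/-- Adding a box to an order ideal. -/
def addI {n : ℕ} {lam : ℕ → ℕ} (J : OIdeal (PP n lam)) (p : PP n lam)
    (hadd : IsLowerSet (J.1 ∪ {p})) : OIdeal (PP n lam) :=
  ⟨J.1 ∪ {p}, hadd⟩

section StepCtx

variable {n : ℕ} {lam : ℕ → ℕ} {J : OIdeal (PP n lam)} {p : PP n lam} {i j : ℕ}

lemma no_above (hp : p ∉ J.1) (y : ℕ × ℕ) (hy : (p : ℕ × ℕ) ≤ y) : ¬ memO J y := by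
  intro hm
  exact hp (memO_coe.1 (memO_mono p.2 hy hm))

lemma below_mem (hadd : IsLowerSet (J.1 ∪ {p})) :
    ∀ y ∈ shiftCells n lam, y < (p : ℕ × ℕ) → memO J y := by
  intro y hy hlt
  have hle : (⟨y, hy⟩ : PP n lam) ≤ p := by
    rw [← Subtype.coe_le_coe]; exact le_of_lt hlt
  have : (⟨y, hy⟩ : PP n lam) ∈ J.1 ∪ {p} := hadd hle (by right; rfl)
  rcases this with h | h
  · exact ⟨hy, h⟩
  · exfalso
    exact absurd (congrArg Subtype.val h) (ne_of_lt hlt)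

lemma memO_addI (hadd : IsLowerSet (J.1 ∪ {p})) {x : ℕ × ℕ} :
    memO (addI J p hadd) x ↔ memO J x ∨ x = (p : ℕ × ℕ) := by
  constructor
  · rintro ⟨hx, hm⟩
    rcases hm with h | h
    · exact Or.inl ⟨hx, h⟩
    · exact Or.inr (congrArg Subtype.val h)
  · rintro (⟨hx, hm⟩ | rfl)
    · exact ⟨hx, Or.inl hm⟩
    · exact ⟨p.2, Or.inr (by simp [Subtype.ext_iff])⟩

variable (hpc : (p : ℕ × ℕ) = (i, j))

lemma T_p_J_plus (hp : p ∉ J.1) (hadd : IsLowerSet (J.1 ∪ {p})) : Tplus p J = 1 := by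
  rw [tplus_eq]
  rw [if_pos ⟨fun h => hp (memO_coe.1 h), below_mem hadd⟩]

lemma T_p_J_minus (hp : p ∉ J.1) : Tminus p J = 0 := by
  rw [tminus_eq, if_neg]
  rintro ⟨hm, -⟩
  exact hp (memO_coe.1 hm)

lemma T_p_I_plus (hadd : IsLowerSet (J.1 ∪ {p})) : Tplus p (addI J p hadd) = 0 := by
  rw [tplus_eq, if_neg]
  rintro ⟨hm, -⟩
  exact hm ((memO_addI hadd).2 (Or.inr rfl))

lemma T_p_I_minus (hp : p ∉ J.1) (hadd : IsLowerSet (J.1 ∪ {p})) :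
    Tminus p (addI J p hadd) = 1 := by
  rw [tminus_eq, if_pos]
  refine ⟨(memO_addI hadd).2 (Or.inr rfl), fun y hy hlt hm => ?_⟩
  rcases (memO_addI hadd).1 hm with h | h
  · exact no_above hp y (le_of_lt hlt) h
  · subst h; exact lt_irrefl _ hlt

end StepCtx

end ChunkTwo

section ChunkThree

variable {n : ℕ} {lam : ℕ → ℕ} {J : OIdeal (PP n lam)} {p : PP n lam} {i j : ℕ}

-- ### Lemmas about the box `u1 = (i, j+1)` (right neighbour of `p`)

lemma T_u1_J_plus (hp : p ∉ J.1) (hpc : (p : ℕ × ℕ) = (i, j))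
    (hu1 : (i, j + 1) ∈ shiftCells n lam) :
    Tplus (⟨(i, j + 1), hu1⟩ : PP n lam) J = 0 := by
  rw [tplus_eq, if_neg]
  rintro ⟨-, hall⟩
  have hplt : (p : ℕ × ℕ) < (i, j + 1) := by
    rw [hpc, prod_lt_mk]; omega
  exact no_above hp _ le_rfl (hall (p : ℕ × ℕ) p.2 hplt)

lemma T_u1_J_minus (hp : p ∉ J.1) (hpc : (p : ℕ × ℕ) = (i, j))
    (hu1 : (i, j + 1) ∈ shiftCells n lam) :
    Tminus (⟨(i, j + 1), hu1⟩ : PP n lam) J = 0 := by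
  rw [tminus_eq, if_neg]
  rintro ⟨hm, -⟩
  exact no_above hp _ (by rw [hpc, prod_le_mk]; omega) hm

lemma T_u1_I_minus (hp : p ∉ J.1) (hadd : IsLowerSet (J.1 ∪ {p}))
    (hpc : (p : ℕ × ℕ) = (i, j)) (hu1 : (i, j + 1) ∈ shiftCells n lam) :
    Tminus (⟨(i, j + 1), hu1⟩ : PP n lam) (addI J p hadd) = 0 := by
  rw [tminus_eq, if_neg]
  rintro ⟨hm, -⟩
  rcases (memO_addI hadd).1 hm with h | h
  · exact no_above hp _ (by rw [hpc, prod_le_mk]; omega) h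
  · rw [hpc] at h
    exact absurd (congrArg Prod.snd h) (by simp)

lemma T_u1_I_plus_pos (hp : p ∉ J.1) (hadd : IsLowerSet (J.1 ∪ {p}))
    (hpc : (p : ℕ × ℕ) = (i, j)) (hu1 : (i, j + 1) ∈ shiftCells n lam)
    (hg : 2 ≤ i → memO (addI J p hadd) (i - 1, j + 1)) :
    Tplus (⟨(i, j + 1), hu1⟩ : PP n lam) (addI J p hadd) = 1 := by
  have hpS : (i, j) ∈ shiftCells n lam := hpc ▸ p.2
  rw [mem_shiftCells'] at hpS
  rw [tplus_eq, if_pos]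
  constructor
  · intro hm
    rcases (memO_addI hadd).1 hm with h | h
    · exact no_above hp _ (by rw [hpc, prod_le_mk]; omega) h
    · rw [hpc] at h
      exact absurd (congrArg Prod.snd h) (by simp)
  · rintro ⟨a, b⟩ hy hlt
    rw [prod_lt_mk] at hlt
    rcases Nat.lt_or_ge b (j + 1) with hb | hb
    · -- y ≤ p
      have hyp : (a, b) ≤ (p : ℕ × ℕ) := by rw [hpc, prod_le_mk]; omega
      rcases eq_or_lt_of_le hyp with h | h
      · exact (memO_addI hadd).2 (Or.inr h)
      · exact (memO_addI hadd).2 (Or.inl (below_mem hadd _ hy h))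
    · -- b = j + 1, a ≤ i - 1
      have hb' : b = j + 1 := by omega
      subst hb'
      have ha : a ≤ i - 1 := by omega
      rw [mem_shiftCells'] at hy
      have h2 : 2 ≤ i := by omega
      have := hg h2
      exact memO_mono (by rw [mem_shiftCells']; exact hy)
        (by rw [prod_le_mk]; omega) this

lemma T_u1_I_plus_neg (hadd : IsLowerSet (J.1 ∪ {p}))
    (hpc : (p : ℕ × ℕ) = (i, j)) (hu1 : (i, j + 1) ∈ shiftCells n lam)
    (h2 : 2 ≤ i) (hoth : (i - 1, j + 1) ∈ shiftCells n lam)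
    (hg : ¬ memO (addI J p hadd) (i - 1, j + 1)) :
    Tplus (⟨(i, j + 1), hu1⟩ : PP n lam) (addI J p hadd) = 0 := by
  rw [tplus_eq, if_neg]
  rintro ⟨-, hall⟩
  exact hg (hall _ hoth (by rw [prod_lt_mk]; omega))

-- ### Lemmas about the box `d1 = (i-1, j)`

lemma T_d1_plus_J (hadd : IsLowerSet (J.1 ∪ {p}))
    (hpc : (p : ℕ × ℕ) = (i, j)) (h2 : 2 ≤ i) (hd1 : (i - 1, j) ∈ shiftCells n lam) :
    Tplus (⟨(i - 1, j), hd1⟩ : PP n lam) J = 0 := by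
  rw [tplus_eq, if_neg]
  rintro ⟨hm, -⟩
  exact hm (below_mem hadd _ hd1 (by rw [hpc, prod_lt_mk]; omega))

lemma T_d1_plus_I (hadd : IsLowerSet (J.1 ∪ {p}))
    (hpc : (p : ℕ × ℕ) = (i, j)) (h2 : 2 ≤ i) (hd1 : (i - 1, j) ∈ shiftCells n lam) :
    Tplus (⟨(i - 1, j), hd1⟩ : PP n lam) (addI J p hadd) = 0 := by
  rw [tplus_eq, if_neg]
  rintro ⟨hm, -⟩
  exact hm ((memO_addI hadd).2
    (Or.inl (below_mem hadd _ hd1 (by rw [hpc, prod_lt_mk]; omega))))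

lemma T_d1_minus_I (hadd : IsLowerSet (J.1 ∪ {p}))
    (hpc : (p : ℕ × ℕ) = (i, j)) (h2 : 2 ≤ i) (hd1 : (i - 1, j) ∈ shiftCells n lam) :
    Tminus (⟨(i - 1, j), hd1⟩ : PP n lam) (addI J p hadd) = 0 := by
  rw [tminus_eq, if_neg]
  rintro ⟨-, hall⟩
  exact hall (p : ℕ × ℕ) p.2 (by rw [hpc, prod_lt_mk]; omega)
    ((memO_addI hadd).2 (Or.inr rfl))

lemma T_d1_minus_J_pos (hp : p ∉ J.1) (hadd : IsLowerSet (J.1 ∪ {p}))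
    (hpc : (p : ℕ × ℕ) = (i, j)) (h2 : 2 ≤ i) (hd1 : (i - 1, j) ∈ shiftCells n lam)
    (hg : ¬ memO J (i - 1, j + 1)) :
    Tminus (⟨(i - 1, j), hd1⟩ : PP n lam) J = 1 := by
  have hpS : (i, j) ∈ shiftCells n lam := hpc ▸ p.2
  rw [mem_shiftCells'] at hpS
  rw [tminus_eq, if_pos]
  refine ⟨below_mem hadd _ hd1 (by rw [hpc, prod_lt_mk]; omega), ?_⟩
  rintro ⟨a, b⟩ hy hlt hm
  rw [prod_lt_mk] at hlt
  rcases Nat.lt_or_ge a i with ha | ha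
  · -- a = i - 1, b ≥ j + 1
    have ha' : a = i - 1 := by omega
    subst ha'
    have hb : j + 1 ≤ b := by omega
    have hothS : (i - 1, j + 1) ∈ shiftCells n lam := by
      rw [mem_shiftCells'] at hy ⊢
      omega
    exact hg (memO_mono hothS (by rw [prod_le_mk]; omega) hm)
  · exact no_above hp _ (by rw [hpc, prod_le_mk]; omega) hm

lemma T_d1_minus_J_neg (hpc : (p : ℕ × ℕ) = (i, j)) (h2 : 2 ≤ i)
    (hd1 : (i - 1, j) ∈ shiftCells n lam)
    (hg : memO J (i - 1, j + 1)) :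
    Tminus (⟨(i - 1, j), hd1⟩ : PP n lam) J = 0 := by
  obtain ⟨hS, -⟩ := id hg
  rw [tminus_eq, if_neg]
  rintro ⟨-, hall⟩
  exact hall _ hS (by rw [prod_lt_mk]; omega) hg

-- ### Lemmas about the box `u2 = (i+1, j)`

lemma T_u2_J_plus (hp : p ∉ J.1) (hpc : (p : ℕ × ℕ) = (i, j))
    (hu2 : (i + 1, j) ∈ shiftCells n lam) :
    Tplus (⟨(i + 1, j), hu2⟩ : PP n lam) J = 0 := by
  rw [tplus_eq, if_neg]
  rintro ⟨-, hall⟩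
  have hplt : (p : ℕ × ℕ) < (i + 1, j) := by rw [hpc, prod_lt_mk]; omega
  exact no_above hp _ le_rfl (hall (p : ℕ × ℕ) p.2 hplt)

lemma T_u2_J_minus (hp : p ∉ J.1) (hpc : (p : ℕ × ℕ) = (i, j))
    (hu2 : (i + 1, j) ∈ shiftCells n lam) :
    Tminus (⟨(i + 1, j), hu2⟩ : PP n lam) J = 0 := by
  rw [tminus_eq, if_neg]
  rintro ⟨hm, -⟩
  exact no_above hp _ (by rw [hpc, prod_le_mk]; omega) hm

lemma T_u2_I_minus (hp : p ∉ J.1) (hadd : IsLowerSet (J.1 ∪ {p}))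
    (hpc : (p : ℕ × ℕ) = (i, j)) (hu2 : (i + 1, j) ∈ shiftCells n lam) :
    Tminus (⟨(i + 1, j), hu2⟩ : PP n lam) (addI J p hadd) = 0 := by
  rw [tminus_eq, if_neg]
  rintro ⟨hm, -⟩
  rcases (memO_addI hadd).1 hm with h | h
  · exact no_above hp _ (by rw [hpc, prod_le_mk]; omega) h
  · rw [hpc] at h
    exact absurd (congrArg Prod.fst h) (by simp)

lemma T_u2_I_plus_pos (hp : p ∉ J.1) (hadd : IsLowerSet (J.1 ∪ {p}))
    (hpc : (p : ℕ × ℕ) = (i, j)) (hu2 : (i + 1, j) ∈ shiftCells n lam)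
    (hg : (i + 1, j - 1) ∈ shiftCells n lam → memO (addI J p hadd) (i + 1, j - 1)) :
    Tplus (⟨(i + 1, j), hu2⟩ : PP n lam) (addI J p hadd) = 1 := by
  have hpS : (i, j) ∈ shiftCells n lam := hpc ▸ p.2
  rw [mem_shiftCells'] at hpS
  rw [tplus_eq, if_pos]
  constructor
  · intro hm
    rcases (memO_addI hadd).1 hm with h | h
    · exact no_above hp _ (by rw [hpc, prod_le_mk]; omega) h
    · rw [hpc] at h
      exact absurd (congrArg Prod.fst h) (by simp)
  · rintro ⟨a, b⟩ hy hlt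
    rw [prod_lt_mk] at hlt
    rcases Nat.lt_or_ge a (i + 1) with ha | ha
    · -- y ≤ p
      have hyp : (a, b) ≤ (p : ℕ × ℕ) := by rw [hpc, prod_le_mk]; omega
      rcases eq_or_lt_of_le hyp with h | h
      · exact (memO_addI hadd).2 (Or.inr h)
      · exact (memO_addI hadd).2 (Or.inl (below_mem hadd _ hy h))
    · -- a = i + 1, b ≤ j - 1
      have ha' : a = i + 1 := by omega
      subst ha'
      have hyS := hy
      rw [mem_shiftCells'] at hyS
      have hb : b ≤ j - 1 := by omega
      have hothS : (i + 1, j - 1) ∈ shiftCells n lam := by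
        rw [mem_shiftCells'] at hu2 ⊢
        omega
      exact memO_mono hy (by rw [prod_le_mk]; omega) (hg hothS)

lemma T_u2_I_plus_neg (hadd : IsLowerSet (J.1 ∪ {p}))
    (hpc : (p : ℕ × ℕ) = (i, j)) (hu2 : (i + 1, j) ∈ shiftCells n lam)
    (hoth : (i + 1, j - 1) ∈ shiftCells n lam) (hj : 1 ≤ j)
    (hg : ¬ memO (addI J p hadd) (i + 1, j - 1)) :
    Tplus (⟨(i + 1, j), hu2⟩ : PP n lam) (addI J p hadd) = 0 := by
  rw [tplus_eq, if_neg]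
  rintro ⟨-, hall⟩
  have : (i + 1, j - 1) < (i + 1, j) := by
    rw [prod_lt_mk]
    rw [mem_shiftCells'] at hoth
    omega
  exact hg (hall _ hoth this)

-- ### Lemmas about the box `d2 = (i, j-1)`

lemma T_d2_plus_J (hadd : IsLowerSet (J.1 ∪ {p}))
    (hpc : (p : ℕ × ℕ) = (i, j)) (hd2 : (i, j - 1) ∈ shiftCells n lam) (hij : i < j) :
    Tplus (⟨(i, j - 1), hd2⟩ : PP n lam) J = 0 := by
  rw [tplus_eq, if_neg]
  rintro ⟨hm, -⟩
  exact hm (below_mem hadd _ hd2 (by rw [hpc, prod_lt_mk]; omega))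

lemma T_d2_plus_I (hadd : IsLowerSet (J.1 ∪ {p}))
    (hpc : (p : ℕ × ℕ) = (i, j)) (hd2 : (i, j - 1) ∈ shiftCells n lam) (hij : i < j) :
    Tplus (⟨(i, j - 1), hd2⟩ : PP n lam) (addI J p hadd) = 0 := by
  rw [tplus_eq, if_neg]
  rintro ⟨hm, -⟩
  exact hm ((memO_addI hadd).2
    (Or.inl (below_mem hadd _ hd2 (by rw [hpc, prod_lt_mk]; omega))))

lemma T_d2_minus_I (hadd : IsLowerSet (J.1 ∪ {p}))
    (hpc : (p : ℕ × ℕ) = (i, j)) (hd2 : (i, j - 1) ∈ shiftCells n lam) (hij : i < j) :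
    Tminus (⟨(i, j - 1), hd2⟩ : PP n lam) (addI J p hadd) = 0 := by
  rw [tminus_eq, if_neg]
  rintro ⟨-, hall⟩
  exact hall (p : ℕ × ℕ) p.2 (by rw [hpc, prod_lt_mk]; omega)
    ((memO_addI hadd).2 (Or.inr rfl))

lemma T_d2_minus_J_pos (sh : Shape n lam) (hp : p ∉ J.1) (hadd : IsLowerSet (J.1 ∪ {p}))
    (hpc : (p : ℕ × ℕ) = (i, j)) (hd2 : (i, j - 1) ∈ shiftCells n lam) (hij : i < j)
    (hg : ¬ memO J (i + 1, j - 1)) :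
    Tminus (⟨(i, j - 1), hd2⟩ : PP n lam) J = 1 := by
  have hpS : (i, j) ∈ shiftCells n lam := hpc ▸ p.2
  rw [mem_shiftCells'] at hpS
  have hd2' := hd2
  rw [mem_shiftCells'] at hd2'
  rw [tminus_eq, if_pos]
  refine ⟨below_mem hadd _ hd2 (by rw [hpc, prod_lt_mk]; omega), ?_⟩
  rintro ⟨a, b⟩ hy hlt hm
  rw [prod_lt_mk] at hlt
  have hyS := hy
  rw [mem_shiftCells'] at hyS
  rcases Nat.lt_or_ge a (i + 1) with ha | ha
  · -- a = i, hence b ≥ j, so y ≥ p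
    have ha' : a = i := by omega
    subst ha'
    exact no_above hp _ (by rw [hpc, prod_le_mk]; omega) hm
  · -- a ≥ i + 1
    rcases Nat.lt_or_ge (j - 1) (i + 1) with hcase | hcase
    · -- j = i + 1, so y ≥ p
      exact no_above hp _ (by rw [hpc, prod_le_mk]; omega) hm
    · -- oth2 = (i+1, j-1) is a cell below y
      have h1 : (i + 1, b) ∈ shiftCells n lam := sh.cell_up hy (by omega) ha
      have h2 : (i + 1, j - 1) ∈ shiftCells n lam := cell_left h1 hcase (by omega)
      exact hg (memO_mono h2 (by rw [prod_le_mk]; omega) hm)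

lemma T_d2_minus_J_neg (hpc : (p : ℕ × ℕ) = (i, j))
    (hd2 : (i, j - 1) ∈ shiftCells n lam) (hij : i < j)
    (hg : memO J (i + 1, j - 1)) :
    Tminus (⟨(i, j - 1), hd2⟩ : PP n lam) J = 0 := by
  obtain ⟨hS, -⟩ := id hg
  have hS' := hS
  rw [mem_shiftCells'] at hS'
  rw [tminus_eq, if_neg]
  rintro ⟨-, hall⟩
  exact hall _ hS (by rw [prod_lt_mk]; omega) hg

end ChunkThree

section ChunkFour

variable {n : ℕ} {lam : ℕ → ℕ} {J : OIdeal (PP n lam)} {p : PP n lam} {i j : ℕ}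

/-- Toggleability is unchanged away from `p` and its four neighbours. -/
lemma T_unchanged (sh : Shape n lam) (hp : p ∉ J.1) (hadd : IsLowerSet (J.1 ∪ {p}))
    (hpc : (p : ℕ × ℕ) = (i, j)) (q : PP n lam)
    (h1 : (q : ℕ × ℕ) ≠ (i, j)) (h2 : (q : ℕ × ℕ) ≠ (i, j + 1))
    (h3 : (q : ℕ × ℕ) ≠ (i + 1, j)) (h4 : (q : ℕ × ℕ) ≠ (i - 1, j))
    (h5 : (q : ℕ × ℕ) ≠ (i, j - 1)) :
    Tplus q (addI J p hadd) = Tplus q J ∧ Tminus q (addI J p hadd) = Tminus q J := by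
  have hpS : (i, j) ∈ shiftCells n lam := hpc ▸ p.2
  have hpS' := hpS
  rw [mem_shiftCells'] at hpS'
  rcases hqc : (q : ℕ × ℕ) with ⟨a, b⟩
  rw [hqc] at h1 h2 h3 h4 h5
  simp only [ne_eq, Prod.mk.injEq, not_and] at h1 h2 h3 h4 h5
  have hqS : (a, b) ∈ shiftCells n lam := hqc ▸ q.2
  have hqS' := hqS
  rw [mem_shiftCells'] at hqS'
  constructor
  · -- Tplus
    rw [tplus_eq, tplus_eq]
    apply if_congr _ rfl rfl
    constructor
    · rintro ⟨hm, hall⟩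
      refine ⟨fun hmJ => hm ((memO_addI hadd).2 (Or.inl hmJ)), fun y hy hlt => ?_⟩
      rcases (memO_addI hadd).1 (hall y hy hlt) with hJ | hyp
      · exact hJ
      · exfalso
        subst hyp
        rw [hpc] at hlt hy
        rw [hqc] at hlt
        rw [prod_lt_mk] at hlt
        -- p < q strictly; find an intermediate cell r with p < r < q, r ∉ I'
        have key : ∀ r : ℕ × ℕ, r ∈ shiftCells n lam → (i, j) < r → r < (a, b) → False := by
          rintro ⟨r1, r2⟩ hrS hr1 hr2
          have hmem := hall (r1, r2) hrS (by rw [hqc]; exact hr2)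
          rcases (memO_addI hadd).1 hmem with hJ | heq
          · exact no_above hp _ (by rw [hpc]; exact le_of_lt hr1) hJ
          · rw [hpc] at heq
            rw [prod_lt_mk] at hr1
            simp only [Prod.mk.injEq] at heq
            omega
        by_cases hai : a = i
        · subst hai
          have hb : j + 2 ≤ b := by
            have := h2 rfl
            omega
          exact key (a, j + 1) (cell_left hqS (by omega) (by omega))
            (by rw [prod_lt_mk]; omega) (by rw [prod_lt_mk]; omega)
        · by_cases hbj : b = j
          · subst hbj
            have ha : i + 2 ≤ a := by
              have := fun h => h3 h rfl
              omega
            exact key (i + 1, b) (sh.cell_up hqS (by omega) (by omega))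
              (by rw [prod_lt_mk]; omega) (by rw [prod_lt_mk]; omega)
          · have hab : i + 1 ≤ a ∧ j + 1 ≤ b := by omega
            exact key (i, b) (sh.cell_up hqS (by omega) (by omega))
              (by rw [prod_lt_mk]; omega) (by rw [prod_lt_mk]; omega)
    · rintro ⟨hm, hall⟩
      constructor
      · intro hmI
        rcases (memO_addI hadd).1 hmI with hJ | heq
        · exact hm hJ
        · rw [hpc] at heq
          rw [hqc] at heq
          simp only [Prod.mk.injEq] at heq
          exact h1 heq.1 heq.2
      · intro y hy hlt
        exact (memO_addI hadd).2 (Or.inl (hall y hy hlt))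
  · -- Tminus
    rw [tminus_eq, tminus_eq]
    apply if_congr _ rfl rfl
    constructor
    · rintro ⟨hm, hall⟩
      constructor
      · rcases (memO_addI hadd).1 hm with hJ | heq
        · exact hJ
        · exfalso
          rw [hpc] at heq
          rw [hqc] at heq
          simp only [Prod.mk.injEq] at heq
          exact h1 heq.1 heq.2
      · intro y hy hlt hmJ
        exact hall y hy hlt ((memO_addI hadd).2 (Or.inl hmJ))
    · rintro ⟨hm, hall⟩
      refine ⟨(memO_addI hadd).2 (Or.inl hm), fun y hy hlt hmI => ?_⟩
      rcases (memO_addI hadd).1 hmI with hJ | heq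
      · exact hall y hy hlt hJ
      · -- y = p, so q < p; find intermediate cell r with q < r < p, r ∈ J
        subst heq
        rw [hpc] at hlt
        rw [hqc] at hlt
        rw [prod_lt_mk] at hlt
        have key : ∀ r : ℕ × ℕ, r ∈ shiftCells n lam → (a, b) < r → r < (i, j) → False := by
          rintro ⟨r1, r2⟩ hrS hr1 hr2
          exact hall (r1, r2) hrS (by rw [hqc]; exact hr1)
            (below_mem hadd _ hrS (by rw [hpc]; exact hr2))
        by_cases hai : a = i
        · subst hai
          have hb : b + 2 ≤ j := by
            have := h5 rfl
            omega
          exact key (a, j - 1) (cell_left hpS (by omega) (by omega))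
            (by rw [prod_lt_mk]; omega) (by rw [prod_lt_mk]; omega)
        · by_cases hbj : b = j
          · subst hbj
            have ha : a + 2 ≤ i := by
              have := fun h => h4 h rfl
              omega
            exact key (i - 1, b) (sh.cell_up hpS (by omega) (by omega))
              (by rw [prod_lt_mk]; omega) (by rw [prod_lt_mk]; omega)
          · have hab : a + 1 ≤ i ∧ b + 1 ≤ j := by omega
            exact key (i - 1, j) (sh.cell_up hpS (by omega) (by omega))
              (by rw [prod_lt_mk]; omega) (by rw [prod_lt_mk]; omega)

/-- The change of the weighted toggle statistic at a box. -/
def DD (J K : OIdeal (PP n lam)) (q : PP n lam) : ℝ :=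
  (1 + cw n (q : ℕ × ℕ)) * (Tplus q K - Tplus q J) +
    (1 - cw n (q : ℕ × ℕ)) * (Tminus q K - Tminus q J)

/-- The change, as a function of coordinates. -/
def gg (J K : OIdeal (PP n lam)) (x : ℕ × ℕ) : ℝ :=
  if h : x ∈ shiftCells n lam then DD J K ⟨x, h⟩ else 0

lemma DD_zero (sh : Shape n lam) (hp : p ∉ J.1) (hadd : IsLowerSet (J.1 ∪ {p}))
    (hpc : (p : ℕ × ℕ) = (i, j)) (q : PP n lam)
    (h1 : (q : ℕ × ℕ) ≠ (i, j)) (h2 : (q : ℕ × ℕ) ≠ (i, j + 1))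
    (h3 : (q : ℕ × ℕ) ≠ (i + 1, j)) (h4 : (q : ℕ × ℕ) ≠ (i - 1, j))
    (h5 : (q : ℕ × ℕ) ≠ (i, j - 1)) :
    DD J (addI J p hadd) q = 0 := by
  obtain ⟨e1, e2⟩ := T_unchanged sh hp hadd hpc q h1 h2 h3 h4 h5
  rw [DD, e1, e2]
  ring

end ChunkFour

section ChunkFive

variable {n : ℕ} {lam : ℕ → ℕ} {J : OIdeal (PP n lam)} {p : PP n lam} {i j : ℕ}

lemma gg_p (hp : p ∉ J.1) (hadd : IsLowerSet (J.1 ∪ {p})) (hpc : (p : ℕ × ℕ) = (i, j)) :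
    gg J (addI J p hadd) (i, j) = -2 * cw n (i, j) := by
  have hpS : (i, j) ∈ shiftCells n lam := hpc ▸ p.2
  rw [gg, dif_pos hpS]
  have hq : (⟨(i, j), hpS⟩ : PP n lam) = p := Subtype.ext hpc.symm
  rw [hq, DD, T_p_I_plus hadd, T_p_J_plus hp hadd, T_p_I_minus hp hadd, T_p_J_minus hp, hpc]
  ring

lemma gg_pair1 (sh : Shape n lam) (hp : p ∉ J.1) (hadd : IsLowerSet (J.1 ∪ {p}))
    (hpc : (p : ℕ × ℕ) = (i, j)) :
    gg J (addI J p hadd) (i, j + 1) + gg J (addI J p hadd) (i - 1, j)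
      = 2 * (n : ℝ) - i - j := by
  have hpS : (i, j) ∈ shiftCells n lam := hpc ▸ p.2
  have hpS' := hpS
  rw [mem_shiftCells'] at hpS'
  have hcwu1 : cw n (i, j + 1) = 2 * (n : ℝ) - i - (j + 1) := by
    rw [cw, if_neg (by simp only; omega)]
    push_cast
    ring
  by_cases hu1 : (i, j + 1) ∈ shiftCells n lam
  · by_cases h2i : 2 ≤ i
    · have hoth : (i - 1, j + 1) ∈ shiftCells n lam := sh.cell_up hu1 (by omega) (by omega)
      have hd1 : (i - 1, j) ∈ shiftCells n lam := cell_left hoth (by omega) (by omega)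
      have hcwd1 : cw n (i - 1, j) = 2 * (n : ℝ) - ((i : ℝ) - 1) - j := by
        rw [cw, if_neg (by simp only; omega), Nat.cast_sub (by omega : 1 ≤ i)]
        push_cast
        ring
      rw [gg, dif_pos hu1, gg, dif_pos hd1, DD, DD,
        T_u1_J_plus hp hpc hu1, T_u1_J_minus hp hpc hu1, T_u1_I_minus hp hadd hpc hu1,
        T_d1_plus_J hadd hpc h2i hd1, T_d1_plus_I hadd hpc h2i hd1,
        T_d1_minus_I hadd hpc h2i hd1]
      by_cases hmem : memO (addI J p hadd) (i - 1, j + 1)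
      · have hmemJ : memO J (i - 1, j + 1) := by
          rcases (memO_addI hadd).1 hmem with h | h
          · exact h
          · exfalso
            rw [hpc] at h
            simp only [Prod.mk.injEq] at h
            omega
        rw [T_u1_I_plus_pos hp hadd hpc hu1 (fun _ => hmem),
          T_d1_minus_J_neg hpc h2i hd1 hmemJ, hcwu1]
        push_cast
        ring
      · have hmemJ : ¬ memO J (i - 1, j + 1) :=
          fun h => hmem ((memO_addI hadd).2 (Or.inl h))
        rw [T_u1_I_plus_neg hadd hpc hu1 h2i hoth hmem,
          T_d1_minus_J_pos hp hadd hpc h2i hd1 hmemJ, hcwu1, hcwd1]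
        push_cast
        ring
    · -- i = 1 : no box above, gain is automatic
      have hd1 : (i - 1, j) ∉ shiftCells n lam := by
        rw [mem_shiftCells']
        omega
      rw [gg, dif_pos hu1, gg, dif_neg hd1, DD,
        T_u1_J_plus hp hpc hu1, T_u1_J_minus hp hpc hu1, T_u1_I_minus hp hadd hpc hu1,
        T_u1_I_plus_pos hp hadd hpc hu1 (fun h => absurd h (by omega)), hcwu1]
      push_cast
      ring
  · -- u1 is not a cell : p is the last box of its row
    have hj1 : j + 1 = lam i + i := by
      rw [mem_shiftCells'] at hu1
      push_neg at hu1
      have := hu1 (by omega) (by omega) (by omega)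
      omega
    rw [gg, dif_neg hu1]
    by_cases h2i : 2 ≤ i
    · have hd1 : (i - 1, j) ∈ shiftCells n lam := sh.cell_up hpS (by omega) (by omega)
      rw [gg, dif_pos hd1, DD,
        T_d1_plus_J hadd hpc h2i hd1, T_d1_plus_I hadd hpc h2i hd1,
        T_d1_minus_I hadd hpc h2i hd1]
      by_cases hoth : (i - 1, j + 1) ∈ shiftCells n lam
      · -- balanced corner: the coefficient 1 - cw vanishes and 2n-i-j = 0
        have hgap : lam ((i - 1) + 1) + 2 ≤ lam (i - 1) := by
          have hoth' := hoth
          rw [mem_shiftCells'] at hoth'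
          have : (i - 1) + 1 = i := by omega
          rw [this]
          omega
        have hcor := sh.corner (i - 1) (by omega) (by omega) hgap
        rw [show (i - 1) + 1 = i by omega] at hcor
        have hij2 : i + j = 2 * n := by omega
        have hij2' : (i : ℝ) + j = 2 * n := by exact_mod_cast hij2
        have hcwd1 : cw n (i - 1, j) = 1 := by
          rw [cw, if_neg (by simp only; omega), Nat.cast_sub (by omega : 1 ≤ i)]
          push_cast
          linarith
        rw [hcwd1]
        ring_nf
        linarith
      · have hg : ¬ memO J (i - 1, j + 1) := fun h => hoth h.1
        rw [T_d1_minus_J_pos hp hadd hpc h2i hd1 hg]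
        have hcwd1 : cw n (i - 1, j) = 2 * (n : ℝ) - ((i : ℝ) - 1) - j := by
          rw [cw, if_neg (by simp only; omega), Nat.cast_sub (by omega : 1 ≤ i)]
          push_cast
          ring
        rw [hcwd1]
        push_cast
        ring
    · -- i = 1 and p is the last box of the first row: j = 2n - 1
      have hd1 : (i - 1, j) ∉ shiftCells n lam := by
        rw [mem_shiftCells']
        omega
      rw [gg, dif_neg hd1]
      have hfirst := sh.first
      have hi1 : i = 1 := by omega
      subst hi1
      have hj2 : 1 + j = 2 * n := by omega
      have hj2' : 1 + (j : ℝ) = 2 * n := by exact_mod_cast hj2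
      push_cast
      linarith

lemma gg_pair2 (sh : Shape n lam) (hp : p ∉ J.1) (hadd : IsLowerSet (J.1 ∪ {p}))
    (hpc : (p : ℕ × ℕ) = (i, j)) :
    gg J (addI J p hadd) (i + 1, j) + gg J (addI J p hadd) (i, j - 1)
      = if i = j then 0 else 2 * (n : ℝ) - i - j := by
  have hpS : (i, j) ∈ shiftCells n lam := hpc ▸ p.2
  have hpS' := hpS
  rw [mem_shiftCells'] at hpS'
  by_cases hij : i = j
  · -- diagonal box: no neighbours below/right
    subst hij
    have hu2 : (i + 1, i) ∉ shiftCells n lam := by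
      rw [mem_shiftCells']
      omega
    have hd2 : (i, i - 1) ∉ shiftCells n lam := by
      rw [mem_shiftCells']
      omega
    rw [gg, dif_neg hu2, gg, dif_neg hd2, if_pos rfl]
    ring
  · rw [if_neg hij]
    have hijlt : i < j := by omega
    have hd2 : (i, j - 1) ∈ shiftCells n lam := cell_left hpS (by omega) (by omega)
    by_cases hu2 : (i + 1, j) ∈ shiftCells n lam
    · have hu2' := hu2
      rw [mem_shiftCells'] at hu2'
      rw [gg, dif_pos hu2, gg, dif_pos hd2, DD, DD,
        T_u2_J_plus hp hpc hu2, T_u2_J_minus hp hpc hu2, T_u2_I_minus hp hadd hpc hu2,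
        T_d2_plus_J hadd hpc hd2 hijlt, T_d2_plus_I hadd hpc hd2 hijlt,
        T_d2_minus_I hadd hpc hd2 hijlt]
      by_cases hj1 : j = i + 1
      · -- p just above the diagonal: the gain and the loss both always happen
        subst hj1
        have hoth : (i + 1, (i + 1) - 1) ∉ shiftCells n lam := by
          rw [mem_shiftCells']
          omega
        have hgm : ¬ memO J (i + 1, (i + 1) - 1) := fun h => hoth h.1
        rw [T_u2_I_plus_pos hp hadd hpc hu2 (fun h => absurd h hoth),
          T_d2_minus_J_pos sh hp hadd hpc hd2 hijlt hgm]
        have e1 : cw n (i + 1, i + 1) = (n : ℝ) - ((i : ℝ) + 1) := by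
          rw [cw, if_pos rfl]
          push_cast
          ring
        have e2 : cw n (i, (i + 1) - 1) = (n : ℝ) - i := by
          rw [show (i + 1) - 1 = i from rfl, cw, if_pos rfl]
        rw [e1, e2]
        push_cast
        ring
      · -- j ≥ i + 2
        have hj2 : i + 2 ≤ j := by omega
        have hoth : (i + 1, j - 1) ∈ shiftCells n lam := cell_left hu2 (by omega) (by omega)
        have e1 : cw n (i + 1, j) = 2 * (n : ℝ) - ((i : ℝ) + 1) - j := by
          rw [cw, if_neg (by simp only; omega)]
          push_cast
          ring
        have e2 : cw n (i, j - 1) = 2 * (n : ℝ) - i - ((j : ℝ) - 1) := by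
          rw [cw, if_neg (by simp only; omega), Nat.cast_sub (by omega : 1 ≤ j)]
          push_cast
          ring
        by_cases hmem : memO (addI J p hadd) (i + 1, j - 1)
        · have hmemJ : memO J (i + 1, j - 1) := by
            rcases (memO_addI hadd).1 hmem with h | h
            · exact h
            · exfalso
              rw [hpc] at h
              simp only [Prod.mk.injEq] at h
              omega
          rw [T_u2_I_plus_pos hp hadd hpc hu2 (fun _ => hmem),
            T_d2_minus_J_neg hpc hd2 hijlt hmemJ, e1]
          push_cast
          ring
        · have hmemJ : ¬ memO J (i + 1, j - 1) :=
            fun h => hmem ((memO_addI hadd).2 (Or.inl h))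
          rw [T_u2_I_plus_neg hadd hpc hu2 hoth (by omega) hmem,
            T_d2_minus_J_pos sh hp hadd hpc hd2 hijlt hmemJ, e1, e2]
          push_cast
          ring
    · -- u2 is not a cell
      rw [gg, dif_neg hu2, gg, dif_pos hd2, DD,
        T_d2_plus_J hadd hpc hd2 hijlt, T_d2_plus_I hadd hpc hd2 hijlt,
        T_d2_minus_I hadd hpc hd2 hijlt]
      by_cases hoth : (i + 1, j - 1) ∈ shiftCells n lam
      · -- balanced corner below
        have hoth' := hoth
        rw [mem_shiftCells'] at hoth'
        have hu2' : ¬ (1 ≤ i + 1 ∧ i + 1 ≤ n ∧ i + 1 ≤ j ∧ j < lam (i + 1) + (i + 1)) := by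
          rw [← mem_shiftCells']
          exact hu2
        have hjval : j = lam (i + 1) + (i + 1) := by omega
        have hgap : lam (i + 1) + 2 ≤ lam i := by omega
        have hcor := sh.corner i (by omega) (by omega) hgap
        have hij2 : i + j = 2 * n := by omega
        have hij2' : (i : ℝ) + j = 2 * n := by exact_mod_cast hij2
        have hcwd2 : cw n (i, j - 1) = 1 := by
          rw [cw, if_neg (by simp only; omega), Nat.cast_sub (by omega : 1 ≤ j)]
          push_cast
          linarith
        rw [hcwd2]
        ring_nf
        linarith
      · -- neither u2 nor oth2 is a cell
        have hgm : ¬ memO J (i + 1, j - 1) := fun h => hoth h.1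
        rw [T_d2_minus_J_pos sh hp hadd hpc hd2 hijlt hgm]
        by_cases hj1 : j = i + 1
        · -- then i = n
          subst hj1
          have hin : i = n := by
            by_contra hin
            apply hu2
            rw [mem_shiftCells']
            have := sh.pos (i + 1) (by omega) (by omega)
            omega
          have e2 : cw n (i, (i + 1) - 1) = (n : ℝ) - i := by
            rw [show (i + 1) - 1 = i from rfl, cw, if_pos rfl]
          rw [e2]
          subst hin
          push_cast
          ring
        · have hj2 : i + 2 ≤ j := by omega
          have e2 : cw n (i, j - 1) = 2 * (n : ℝ) - i - ((j : ℝ) - 1) := by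
            rw [cw, if_neg (by simp only; omega), Nat.cast_sub (by omega : 1 ≤ j)]
            push_cast
            ring
          rw [e2]
          push_cast
          ring

end ChunkFive

section ChunkSix

variable {n : ℕ} {lam : ℕ → ℕ}

lemma FF_step (sh : Shape n lam) (J : OIdeal (PP n lam)) (p : PP n lam)
    (hp : p ∉ J.1) (hadd : IsLowerSet (J.1 ∪ {p})) :
    FF n lam (addI J p hadd) = FF n lam J := by
  classical
  letI : Fintype (PP n lam) := (shiftCells_finite n lam).fintype
  rcases hpc : (p : ℕ × ℕ) with ⟨i, j⟩
  have hpS : (i, j) ∈ shiftCells n lam := hpc ▸ p.2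
  have hpS' := hpS
  rw [mem_shiftCells'] at hpS'
  set L : Finset (ℕ × ℕ) :=
    insert (i, j) (insert (i, j + 1) (insert (i + 1, j) (insert (i - 1, j) {(i, j - 1)})))
    with hL
  have hdiff : FF n lam (addI J p hadd) - FF n lam J
      = ∑ q : PP n lam, DD J (addI J p hadd) q := by
    rw [FF, FF, finsum_eq_sum_of_fintype, finsum_eq_sum_of_fintype,
      ← Finset.sum_sub_distrib]
    apply Finset.sum_congr rfl
    intro q _
    rw [DD]
    ring
  have hcoe : ∀ q : PP n lam, gg J (addI J p hadd) (q : ℕ × ℕ) = DD J (addI J p hadd) q := by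
    intro q
    rw [gg, dif_pos q.2]
  have hstep1 : ∑ q : PP n lam, DD J (addI J p hadd) q
      = ∑ x ∈ (shiftCells n lam).toFinset, gg J (addI J p hadd) x := by
    rw [Finset.sum_subtype (shiftCells n lam).toFinset
      (fun x => Set.mem_toFinset) (gg J (addI J p hadd))]
    exact Finset.sum_congr rfl fun q _ => (hcoe q).symm
  have hstep2 : ∑ x ∈ (shiftCells n lam).toFinset, gg J (addI J p hadd) x
      = ∑ x ∈ L, gg J (addI J p hadd) x := by
    have e1 : ∑ x ∈ (shiftCells n lam).toFinset, gg J (addI J p hadd) x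
        = ∑ x ∈ (shiftCells n lam).toFinset ∪ L, gg J (addI J p hadd) x := by
      apply Finset.sum_subset Finset.subset_union_left
      intro x hx hnx
      rw [gg, dif_neg]
      intro hxS
      exact hnx (Set.mem_toFinset.2 hxS)
    have e2 : ∑ x ∈ L, gg J (addI J p hadd) x
        = ∑ x ∈ (shiftCells n lam).toFinset ∪ L, gg J (addI J p hadd) x := by
      apply Finset.sum_subset Finset.subset_union_right
      intro x hx hnx
      by_cases hxS : x ∈ shiftCells n lam
      · rw [gg, dif_pos hxS]
        simp only [hL, Finset.mem_insert, Finset.mem_singleton, not_or] at hnx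
        exact DD_zero sh hp hadd hpc ⟨x, hxS⟩ hnx.1 hnx.2.1 hnx.2.2.1 hnx.2.2.2.1 hnx.2.2.2.2
      · rw [gg, dif_neg hxS]
    rw [e1, ← e2]
  have hstep3 : ∑ x ∈ L, gg J (addI J p hadd) x
      = gg J (addI J p hadd) (i, j) + (gg J (addI J p hadd) (i, j + 1)
        + gg J (addI J p hadd) (i - 1, j)) + (gg J (addI J p hadd) (i + 1, j)
        + gg J (addI J p hadd) (i, j - 1)) := by
    rw [hL]
    rw [Finset.sum_insert (by simp only [Finset.mem_insert, Finset.mem_singleton,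
      Prod.mk.injEq, not_or]; omega)]
    rw [Finset.sum_insert (by simp only [Finset.mem_insert, Finset.mem_singleton,
      Prod.mk.injEq, not_or]; omega)]
    rw [Finset.sum_insert (by simp only [Finset.mem_insert, Finset.mem_singleton,
      Prod.mk.injEq, not_or]; omega)]
    rw [Finset.sum_insert (by simp only [Finset.mem_singleton, Prod.mk.injEq, not_and]; omega)]
    rw [Finset.sum_singleton]
    ring
  have hpair1 := gg_pair1 sh hp hadd hpc
  have hpair2 := gg_pair2 sh hp hadd hpc
  have hgp := gg_p hp hadd hpc
  have htot : FF n lam (addI J p hadd) - FF n lam J = 0 := by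
    rw [hdiff, hstep1, hstep2, hstep3, hgp, hpair1, hpair2]
    by_cases hij : i = j
    · subst hij
      rw [if_pos rfl, cw, if_pos rfl]
      ring
    · rw [if_neg hij, cw, if_neg (by simp only; exact hij)]
      push_cast
      ring
  linarith

lemma FF_empty (sh : Shape n lam) :
    FF n lam ⟨∅, isLowerSet_empty⟩ = n := by
  classical
  letI : Fintype (PP n lam) := (shiftCells_finite n lam).fintype
  have h11 : (1, 1) ∈ shiftCells n lam := by
    rw [mem_shiftCells']
    have := sh.pos 1 le_rfl sh.hn
    have := sh.hn
    omega
  rw [FF, finsum_eq_sum_of_fintype]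
  rw [Finset.sum_eq_single (⟨(1, 1), h11⟩ : PP n lam)]
  · have hplus : Tplus (⟨(1, 1), h11⟩ : PP n lam) (⟨∅, isLowerSet_empty⟩ : OIdeal (PP n lam)) = 1 := by
      rw [tplus_eq, if_pos]
      constructor
      · rintro ⟨h1, hm⟩
        exact hm
      · rintro ⟨a, b⟩ hy hlt
        exfalso
        rw [prod_lt_mk] at hlt
        rw [mem_shiftCells'] at hy
        omega
    have hminus : Tminus (⟨(1, 1), h11⟩ : PP n lam) (⟨∅, isLowerSet_empty⟩ : OIdeal (PP n lam)) = 0 := by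
      rw [tminus_eq, if_neg]
      rintro ⟨⟨h1, hm⟩, -⟩
      exact hm
    rw [hplus, hminus]
    have : cw n ((⟨(1, 1), h11⟩ : PP n lam) : ℕ × ℕ) = (n : ℝ) - 1 := by
      rw [cw, if_pos rfl]
      norm_num
    rw [this]
    ring
  · intro q _ hq
    have hqc : (q : ℕ × ℕ) ≠ (1, 1) := by
      intro h
      exact hq (Subtype.ext h)
    have hplus : Tplus q (⟨∅, isLowerSet_empty⟩ : OIdeal (PP n lam)) = 0 := by
      rw [tplus_eq, if_neg]
      rintro ⟨-, hall⟩
      have hlt : (1, 1) < (q : ℕ × ℕ) := by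
        rcases hc : (q : ℕ × ℕ) with ⟨a, b⟩
        have hqS : (a, b) ∈ shiftCells n lam := hc ▸ q.2
        rw [mem_shiftCells'] at hqS
        rw [hc] at hqc
        rw [prod_lt_mk]
        simp only [ne_eq, Prod.mk.injEq, not_and] at hqc
        omega
      obtain ⟨h1, hm⟩ := hall (1, 1) h11 hlt
      exact hm
    have hminus : Tminus q (⟨∅, isLowerSet_empty⟩ : OIdeal (PP n lam)) = 0 := by
      rw [tminus_eq, if_neg]
      rintro ⟨⟨h1, hm⟩, -⟩
      exact hm
    rw [hplus, hminus]
    ring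
  · intro h
    exact absurd (Finset.mem_univ _) h

/-- The main pointwise identity: the weighted toggle statistic is identically `n`. -/
lemma FF_eq (sh : Shape n lam) (I : OIdeal (PP n lam)) : FF n lam I = n := by
  classical
  letI : Fintype (PP n lam) := (shiftCells_finite n lam).fintype
  suffices H : ∀ m (I : OIdeal (PP n lam)), I.1.ncard = m → FF n lam I = n from H _ I rfl
  intro m
  induction m using Nat.strong_induction_on with
  | _ m ih =>
    intro I hcard
    rcases eq_or_ne m 0 with h0 | h0
    · have hem : I.1 = ∅ := by
        rw [← Set.ncard_eq_zero (I.1.toFinite)]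
        omega
      have : I = ⟨∅, isLowerSet_empty⟩ := Subtype.ext hem
      rw [this]
      exact FF_empty sh
    · have hne : I.1.Nonempty := by
        rw [Set.nonempty_iff_ne_empty]
        intro h
        rw [h, Set.ncard_empty] at hcard
        omega
      obtain ⟨p, hpI, hmax⟩ : ∃ a ∈ I.1, ∀ a' ∈ I.1, a ≤ a' → a = a' := by
        obtain ⟨a, ha, h⟩ := Set.Finite.exists_maximalFor id I.1 I.1.toFinite hne
        exact ⟨a, ha, fun a' ha' hle => le_antisymm hle (h ha' hle)⟩
      have hJlow : IsLowerSet (I.1 \ {p}) := by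
        intro a b hba ha
        refine ⟨I.2 hba ha.1, ?_⟩
        intro hb
        rw [Set.mem_singleton_iff] at hb
        subst hb
        have heq := hmax a ha.1 hba
        exact ha.2 (by rw [Set.mem_singleton_iff]; exact heq.symm)
      set J : OIdeal (PP n lam) := ⟨I.1 \ {p}, hJlow⟩ with hJ
      have hpJ : p ∉ J.1 := fun h => h.2 rfl
      have hIJ : J.1 ∪ {p} = I.1 := by
        rw [hJ]
        simp only
        rw [Set.diff_union_self]
        exact Set.union_eq_self_of_subset_right (Set.singleton_subset_iff.2 hpI)
      have hadd : IsLowerSet (J.1 ∪ {p}) := hIJ ▸ I.2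
      have hstep := FF_step sh J p hpJ hadd
      have hIeq : addI J p hadd = I := Subtype.ext hIJ
      rw [hIeq] at hstep
      rw [hstep]
      have hcard' : J.1.ncard + 1 = I.1.ncard :=
        Set.ncard_diff_singleton_add_one hpI I.1.toFinite
      exact ih (m - 1) (by omega) J (by omega)

end ChunkSix

section ChunkSeven

variable {n : ℕ} {lam : ℕ → ℕ}

/-- The covers of an order ideal are in bijection with its removable boxes. -/
lemma ddeg_eq (I : OIdeal (PP n lam)) :
    ddeg I = ∑ᶠ q : PP n lam, Tminus q I := by
  classical
  letI : Fintype (PP n lam) := (shiftCells_finite n lam).fintype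
  -- the bijection
  have hbij : Function.Bijective
      (fun (q : {r : PP n lam // r ∈ I.1 ∧ IsLowerSet (I.1 \ {r})}) =>
        (⟨⟨I.1 \ {q.1}, q.2.2⟩, by
          constructor
          · exact Subtype.coe_lt_coe.1 (Set.sdiff_singleton_ssubset.2 q.2.1)
          · intro K hJK hKI
            have h1 : I.1 \ {q.1} ⊂ K.1 := Subtype.coe_lt_coe.2 hJK
            have h2 : K.1 ⊂ I.1 := Subtype.coe_lt_coe.2 hKI
            obtain ⟨x, hxK, hxJ⟩ := Set.exists_of_ssubset h1
            have hxI : x ∈ I.1 := h2.1 hxK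
            have hxq : x = q.1 := by
              by_contra hne
              exact hxJ ⟨hxI, hne⟩
            subst hxq
            apply h2.2
            intro y hy
            by_cases hyq : y = q.1
            · rwa [hyq]
            · exact h1.1 ⟨hy, hyq⟩⟩ :
          {K : OIdeal (PP n lam) // K ⋖ I})) := by
    constructor
    · rintro ⟨q, hq⟩ ⟨q', hq'⟩ heq
      simp only [Subtype.mk.injEq] at heq ⊢
      have hset : I.1 \ {q} = I.1 \ {q'} :=
        congrArg (fun K : {K : OIdeal (PP n lam) // K ⋖ I} => K.1.1) heq
      by_contra hne
      have : q' ∈ I.1 \ {q} := ⟨hq'.1, fun h => hne (Subtype.ext_iff.2 (by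
        exact congrArg Subtype.val h)).symm⟩
      rw [hset] at this
      exact this.2 rfl
    · rintro ⟨K, hKI⟩
      have hlt : K.1 ⊂ I.1 := Subtype.coe_lt_coe.2 hKI.1
      obtain ⟨x, hxI, hxK⟩ := Set.exists_of_ssubset hlt
      obtain ⟨q, hqmem, hqmin⟩ : ∃ a ∈ I.1 \ K.1, ∀ a' ∈ I.1 \ K.1, a' ≤ a → a = a' := by
        obtain ⟨a, ha, h⟩ :=
          Set.Finite.exists_minimalFor id (I.1 \ K.1) (I.1 \ K.1).toFinite ⟨x, hxI, hxK⟩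
        exact ⟨a, ha, fun a' ha' hle => (le_antisymm hle (h ha' hle)).symm⟩
      have hK'low : IsLowerSet (K.1 ∪ {q}) := by
        intro a b hba ha
        rcases ha with ha | ha
        · exact Or.inl (K.2 hba ha)
        · rw [Set.mem_singleton_iff] at ha
          subst ha
          rcases eq_or_lt_of_le hba with h | h
          · exact Or.inr (by rw [h]; rfl)
          · have hbI : b ∈ I.1 := I.2 (le_of_lt h) hqmem.1
            by_cases hbK : b ∈ K.1
            · exact Or.inl hbK
            · exfalso
              have := hqmin b ⟨hbI, hbK⟩ (le_of_lt h)
              exact absurd this.symm (ne_of_lt h)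
      have hKlt : K < (⟨K.1 ∪ {q}, hK'low⟩ : OIdeal (PP n lam)) := by
        apply Subtype.coe_lt_coe.1
        constructor
        · exact Set.subset_union_left
        · intro hsub
          exact hqmem.2 (hsub (Or.inr rfl))
      have hKeq : K.1 ∪ {q} = I.1 := by
        have hle : (⟨K.1 ∪ {q}, hK'low⟩ : OIdeal (PP n lam)) ≤ I := by
          apply Subtype.coe_le_coe.1
          apply Set.union_subset hlt.1
          rw [Set.singleton_subset_iff]
          exact hqmem.1
        rcases eq_or_lt_of_le hle with h | h
        · exact congrArg Subtype.val h
        · exact absurd h (hKI.2 hKlt)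
      have hKval : K.1 = I.1 \ {q} := by
        ext y
        constructor
        · intro hy
          refine ⟨hKeq ▸ Or.inl hy, fun hc => ?_⟩
          rw [Set.mem_singleton_iff] at hc
          subst hc
          exact hqmem.2 hy
        · rintro ⟨hyI, hyq⟩
          have : y ∈ K.1 ∪ {q} := hKeq.symm ▸ hyI
          rcases this with h | h
          · exact h
          · exact absurd h hyq
      refine ⟨⟨q, hqmem.1, hKval ▸ K.2⟩, ?_⟩
      apply Subtype.ext
      apply Subtype.ext
      simp only
      exact hKval.symm
  -- counting
  rw [ddeg]
  have hcard : Nat.card {K : OIdeal (PP n lam) // K ⋖ I}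
      = Nat.card {q : PP n lam // q ∈ I.1 ∧ IsLowerSet (I.1 \ {q})} :=
    (Nat.card_congr (Equiv.ofBijective _ hbij)).symm
  rw [hcard, finsum_eq_sum_of_fintype]
  simp only [Tminus]
  rw [Finset.sum_boole, Nat.card_eq_fintype_card, Fintype.card_subtype]

/-- For each box, the number of ideals it can be toggled into equals the number it can be
toggled out of. -/
lemma sum_tplus_eq_sum_tminus (p : PP n lam) :
    haveI : Fintype (PP n lam) := (shiftCells_finite n lam).fintype
    haveI : Fintype (OIdeal (PP n lam)) := Fintype.ofFinite _
    (∑ I : OIdeal (PP n lam), Tplus p I) = ∑ I : OIdeal (PP n lam), Tminus p I := by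
  classical
  letI : Fintype (PP n lam) := (shiftCells_finite n lam).fintype
  letI : Fintype (OIdeal (PP n lam)) := Fintype.ofFinite _
  have e : {I : OIdeal (PP n lam) // p ∉ I.1 ∧ IsLowerSet (I.1 ∪ {p})}
      ≃ {I : OIdeal (PP n lam) // p ∈ I.1 ∧ IsLowerSet (I.1 \ {p})} := by
    refine ⟨fun I => ⟨⟨I.1.1 ∪ {p}, I.2.2⟩, Or.inr rfl, ?_⟩,
      fun I => ⟨⟨I.1.1 \ {p}, I.2.2⟩, fun h => h.2 rfl, ?_⟩, ?_, ?_⟩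
    · have : (I.1.1 ∪ {p}) \ {p} = I.1.1 := by
        rw [Set.union_diff_cancel_right]
        rw [Set.subset_empty_iff, Set.eq_empty_iff_forall_notMem]
        rintro x ⟨hx1, hx2⟩
        rw [Set.mem_singleton_iff] at hx2
        subst hx2
        exact I.2.1 hx1
      rw [this]
      exact I.1.2
    · have : (I.1.1 \ {p}) ∪ {p} = I.1.1 := by
        rw [Set.diff_union_self]
        exact Set.union_eq_self_of_subset_right (Set.singleton_subset_iff.2 I.2.1)
      rw [this]
      exact I.1.2
    · rintro ⟨⟨Iv, hIl⟩, hI⟩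
      apply Subtype.ext
      apply Subtype.ext
      simp only
      rw [Set.union_diff_cancel_right]
      rw [Set.subset_empty_iff, Set.eq_empty_iff_forall_notMem]
      rintro x ⟨hx1, hx2⟩
      rw [Set.mem_singleton_iff] at hx2
      subst hx2
      exact hI.1 hx1
    · rintro ⟨⟨Iv, hIl⟩, hI⟩
      apply Subtype.ext
      apply Subtype.ext
      simp only
      rw [Set.diff_union_self]
      exact Set.union_eq_self_of_subset_right (Set.singleton_subset_iff.2 hI.1)
  simp only [Tplus, Tminus]
  rw [Finset.sum_boole, Finset.sum_boole]
  have h3 := Fintype.card_congr e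
  rw [Fintype.card_subtype, Fintype.card_subtype] at h3
  exact_mod_cast h3

lemma uni_prob : IsProbDist (uni (OIdeal (PP n lam))) := by
  classical
  letI : Fintype (PP n lam) := (shiftCells_finite n lam).fintype
  letI : Fintype (OIdeal (PP n lam)) := Fintype.ofFinite _
  constructor
  · intro x
    rw [uni]
    positivity
  · rw [finsum_eq_sum_of_fintype]
    simp only [uni]
    rw [Finset.sum_const, nsmul_eq_mul]
    rw [Nat.card_eq_fintype_card]
    have hpos : 0 < Fintype.card (OIdeal (PP n lam)) :=
      Fintype.card_pos_iff.2 ⟨⟨∅, isLowerSet_empty⟩⟩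
    rw [Finset.card_univ]
    field_simp

lemma uni_toggle : ToggleSymmetric (uni (OIdeal (PP n lam))) := by
  classical
  letI : Fintype (PP n lam) := (shiftCells_finite n lam).fintype
  letI : Fintype (OIdeal (PP n lam)) := Fintype.ofFinite _
  intro p
  rw [expect, expect, finsum_eq_sum_of_fintype, finsum_eq_sum_of_fintype]
  have h := sum_tplus_eq_sum_tminus p
  simp only [uni]
  rw [← Finset.mul_sum, ← Finset.mul_sum]
  rw [h]

/-- Expected down-degree of any toggle-symmetric distribution is `n/2`. -/
lemma expect_ddeg_eq (sh : Shape n lam) (μ : OIdeal (PP n lam) → ℝ)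
    (hprob : IsProbDist μ) (hts : ToggleSymmetric μ) :
    expect μ ddeg = (n : ℝ) / 2 := by
  classical
  letI : Fintype (PP n lam) := (shiftCells_finite n lam).fintype
  letI : Fintype (OIdeal (PP n lam)) := Fintype.ofFinite _
  have hts' : ∀ q : PP n lam,
      (∑ I : OIdeal (PP n lam), μ I * Tplus q I) = ∑ I : OIdeal (PP n lam), μ I * Tminus q I := by
    intro q
    have := hts q
    rwa [expect, expect, finsum_eq_sum_of_fintype, finsum_eq_sum_of_fintype] at this
  have hFF : ∀ I : OIdeal (PP n lam),
      (∑ q : PP n lam, ((1 + cw n (q : ℕ × ℕ)) * Tplus q I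
        + (1 - cw n (q : ℕ × ℕ)) * Tminus q I)) = n := by
    intro I
    have := FF_eq sh I
    rwa [FF, finsum_eq_sum_of_fintype] at this
  have hsum1 : (∑ I : OIdeal (PP n lam), μ I) = 1 := by
    have := hprob.2
    rwa [finsum_eq_sum_of_fintype] at this
  have key : ∑ q : PP n lam, (∑ I : OIdeal (PP n lam),
      μ I * ((1 + cw n (q : ℕ × ℕ)) * Tplus q I + (1 - cw n (q : ℕ × ℕ)) * Tminus q I)) = n := by
    rw [Finset.sum_comm]
    have : ∀ I : OIdeal (PP n lam), (∑ q : PP n lam,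
        μ I * ((1 + cw n (q : ℕ × ℕ)) * Tplus q I + (1 - cw n (q : ℕ × ℕ)) * Tminus q I))
        = μ I * n := by
      intro I
      rw [← Finset.mul_sum, hFF I]
    rw [Finset.sum_congr rfl fun I _ => this I, ← Finset.sum_mul, hsum1, one_mul]
  have expand : ∀ q : PP n lam, (∑ I : OIdeal (PP n lam),
      μ I * ((1 + cw n (q : ℕ × ℕ)) * Tplus q I + (1 - cw n (q : ℕ × ℕ)) * Tminus q I))
      = 2 * ∑ I : OIdeal (PP n lam), μ I * Tminus q I := by
    intro q
    have e1 : ∀ I : OIdeal (PP n lam),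
        μ I * ((1 + cw n (q : ℕ × ℕ)) * Tplus q I + (1 - cw n (q : ℕ × ℕ)) * Tminus q I)
        = (1 + cw n (q : ℕ × ℕ)) * (μ I * Tplus q I)
          + (1 - cw n (q : ℕ × ℕ)) * (μ I * Tminus q I) := fun I => by ring
    rw [Finset.sum_congr rfl fun I _ => e1 I, Finset.sum_add_distrib,
      ← Finset.mul_sum, ← Finset.mul_sum, hts' q]
    ring
  have h2 : (∑ q : PP n lam, ∑ I : OIdeal (PP n lam), μ I * Tminus q I) = (n : ℝ) / 2 := by
    rw [Finset.sum_congr rfl fun q _ => expand q, ← Finset.mul_sum] at key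
    linarith
  rw [expect, finsum_eq_sum_of_fintype]
  have hdd : ∀ I : OIdeal (PP n lam), μ I * ddeg I = ∑ q : PP n lam, μ I * Tminus q I := by
    intro I
    rw [ddeg_eq I, finsum_eq_sum_of_fintype, Finset.mul_sum]
  rw [Finset.sum_congr rfl fun I _ => hdd I, Finset.sum_comm, h2]

end ChunkSeven

/-- Theorem `thm:shiftyounglatcde`(2).  Let `0 ≤ k < n` and let `ν` be a
(not necessarily strict) partition which, as a straight shape, is balanced with height and
width both equal to `k`.  Set `λ := δ_n + ν + (n-1-k)^n`.  Then the distributive lattice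
`[∅, λ]_shift = J(P_λ^shift)` is tCDE: `E(μ; ddeg) = n/2` for every toggle-symmetric
probability distribution `μ`; in particular its edge density is `n/2`. -/
theorem statement13 (n k : ℕ) (hkn : k < n) (nu : ℕ → ℕ) (hbal : BalancedSquare k nu)
    (lam : ℕ → ℕ)
    (hlam : ∀ i, 1 ≤ i → i ≤ n → lam i = (n + 1 - i) + nu i + (n - 1 - k))
    (hlam0 : ∀ i, n < i → lam i = 0) :
    (∀ μ : OIdeal ↥(shiftCells n lam) → ℝ, IsProbDist μ → ToggleSymmetric μ →
        expect μ ddeg = (n : ℝ) / 2) ∧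
      expect (uni (OIdeal ↥(shiftCells n lam))) ddeg = (n : ℝ) / 2 := by
  have sh : Shape n lam := shape_of_balanced hkn hbal hlam
  exact ⟨fun μ hμ hts => expect_ddeg_eq sh μ hμ hts,
    expect_ddeg_eq sh _ uni_prob uni_toggle⟩

end CDEPaper
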